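/- Let G be a graph, C a duplication class of G, C' a nonempty proper subset of C with |C'| ≤ |C| - 2, and H = G \ C' the induced subgraph on V(G) \ C'. Then any two vertices that are duplicates in H are duplicates in G, and any two vertices that are coduplicates in H are coduplicates in G. -/

import Mathlib

open scoped Classical

noncomputable section

/-- The real adjacency matrix of a finite simple graph. -/
def adjM {V : Type*} [Fintype V] (G : SimpleGraph V) : Matrix V V ℝ :=
  G.adjMatrix ℝ

/-- The multiplicity of `μ` as an eigenvalue of the adjacency matrix of `G`
(the dimension of the corresponding eigenspace; `0` if `μ` is not an eigenvalue). -/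
def eigMult {V : Type*} [Fintype V] (G : SimpleGraph V) (μ : ℝ) : ℕ :=
  Module.finrank ℝ (Module.End.eigenspace (Matrix.toLin' (adjM G)) μ)

/-- `μ` is an eigenvalue of the adjacency matrix of `G`. -/
def HasEig {V : Type*} [Fintype V] (G : SimpleGraph V) (μ : ℝ) : Prop :=
  Module.End.HasEigenvalue (Matrix.toLin' (adjM G)) μ

/-- A cograph: no induced path on four vertices. -/
def IsCograph {V : Type*} (G : SimpleGraph V) : Prop :=
  IsEmpty (SimpleGraph.pathGraph 4 ↪g G)

/-- A duplication class: a maximal set of more than one vertex, all with the same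
open neighborhood. -/
def IsDupClass {V : Type*} (G : SimpleGraph V) (S : Set V) : Prop :=
  1 < S.ncard ∧ (∀ u ∈ S, ∀ v ∈ S, G.neighborSet u = G.neighborSet v) ∧
    ∀ T : Set V, S ⊆ T → (∀ u ∈ T, ∀ v ∈ T, G.neighborSet u = G.neighborSet v) → T = S

/-- A coduplication class: a maximal set of more than one vertex, all with the same
closed neighborhood. -/
def IsCodupClass {V : Type*} (G : SimpleGraph V) (S : Set V) : Prop :=
  1 < S.ncard ∧
    (∀ u ∈ S, ∀ v ∈ S, insert u (G.neighborSet u) = insert v (G.neighborSet v)) ∧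
    ∀ T : Set V, S ⊆ T →
      (∀ u ∈ T, ∀ v ∈ T, insert u (G.neighborSet u) = insert v (G.neighborSet v)) → T = S

/-- Removing a nonempty part of a duplication class, leaving at least two vertices of
the class, creates no new duplicate or coduplicate pairs. -/
theorem dup_codup_lift_of_remove_part_of_dupClass {V : Type*} (G : SimpleGraph V)
    (C C' : Set V) (hC : IsDupClass G C) (hne : C'.Nonempty) (hsub : C' ⊆ C)
    (hcard : C'.ncard + 2 ≤ C.ncard)
    (u v : ↥(C'ᶜ : Set V)) (huv : u ≠ v) :
    ((G.induce (C'ᶜ : Set V)).neighborSet u = (G.induce (C'ᶜ : Set V)).neighborSet v →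
      G.neighborSet (u : V) = G.neighborSet (v : V)) ∧
    (insert u ((G.induce (C'ᶜ : Set V)).neighborSet u) =
        insert v ((G.induce (C'ᶜ : Set V)).neighborSet v) →
      insert (u : V) (G.neighborSet (u : V)) = insert (v : V) (G.neighborSet (v : V))) := by
  classical
  obtain ⟨hcard1, hnbr, -⟩ := hC
  have hCfin : C.Finite := by
    by_contra h
    rw [Set.Infinite.ncard h] at hcard1
    omega
  have hC'fin : C'.Finite := hCfin.subset hsub
  have hdiff : 1 < (C \ C').ncard := by
    rw [Set.ncard_diff hsub hC'fin]
    have h1 : C'.ncard ≤ C.ncard := Set.ncard_le_ncard hsub hCfin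
    omega
  obtain ⟨c₁, c₂, hc₁, hc₂, hcc⟩ := (Set.one_lt_ncard_iff (hCfin.diff : (C \ C').Finite)).mp hdiff
  have hnadj : ∀ a ∈ C, ∀ b ∈ C, ¬ G.Adj a b := by
    intro a ha b hb hab
    have h1 : a ∈ G.neighborSet b := hab.symm
    rw [hnbr b hb a ha] at h1
    exact G.irrefl h1
  have htrans : ∀ w ∈ C, ∀ c ∈ C, ∀ x : V, (G.Adj x w ↔ G.Adj x c) := by
    intro w hw c hc x
    have h1 : x ∈ G.neighborSet w ↔ x ∈ G.neighborSet c := by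
      rw [hnbr w hw c hc]
    constructor
    · intro h; exact (h1.mp h.symm).symm
    · intro h; exact (h1.mpr h.symm).symm
  constructor
  · -- open neighborhoods
    intro h
    have hH : ∀ x : ↥(C'ᶜ : Set V), G.Adj (u : V) (x : V) ↔ G.Adj (v : V) (x : V) := by
      intro x
      have := Set.ext_iff.mp h x
      simpa using this
    ext x
    simp only [SimpleGraph.mem_neighborSet]
    by_cases hx : x ∈ C'
    · have hxC : x ∈ C := hsub hx
      exact (htrans x hxC c₁ hc₁.1 (u : V)).trans
        ((hH ⟨c₁, hc₁.2⟩).trans (htrans x hxC c₁ hc₁.1 (v : V)).symm)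
    · exact hH ⟨x, hx⟩
  · -- closed neighborhoods
    intro h
    have hu_mem : (u : ↥(C'ᶜ : Set V)) ∈ insert v ((G.induce (C'ᶜ : Set V)).neighborSet v) := by
      rw [← h]; exact Set.mem_insert _ _
    have hadj_vu : G.Adj (v : V) (u : V) := by
      rcases hu_mem with h1 | h1
      · exact absurd h1 huv
      · simpa using h1
    have hHx : ∀ x : ↥(C'ᶜ : Set V), x ≠ u → x ≠ v →
        (G.Adj (u : V) (x : V) ↔ G.Adj (v : V) (x : V)) := by
      intro x hxu hxv
      have h1 := Set.ext_iff.mp h x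
      simp only [Set.mem_insert_iff, SimpleGraph.mem_neighborSet] at h1
      constructor
      · intro ha
        have := h1.mp (Or.inr (by simpa using ha))
        rcases this with h2 | h2
        · exact absurd h2 hxv
        · simpa using h2
      · intro ha
        have := h1.mpr (Or.inr (by simpa using ha))
        rcases this with h2 | h2
        · exact absurd h2 hxu
        · simpa using h2
    have hnotboth : ¬ ((u : V) ∈ C ∧ (v : V) ∈ C) := by
      rintro ⟨hu, hv⟩
      exact hnadj (v : V) hv (u : V) hu hadj_vu
    obtain ⟨c, hc, hcu, hcv⟩ : ∃ c, c ∈ C \ C' ∧ c ≠ (u : V) ∧ c ≠ (v : V) := by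
      by_cases h1 : c₁ ≠ (u : V) ∧ c₁ ≠ (v : V)
      · exact ⟨c₁, hc₁, h1.1, h1.2⟩
      · push_neg at h1
        refine ⟨c₂, hc₂, ?_, ?_⟩
        · rintro rfl
          by_cases h2 : c₁ = (u : V)
          · exact hcc h2
          · exact hnotboth ⟨hc₂.1, (h1 h2) ▸ hc₁.1⟩
        · rintro rfl
          by_cases h2 : c₁ = (u : V)
          · exact hnotboth ⟨h2 ▸ hc₁.1, hc₂.1⟩
          · exact hcc (h1 h2)
    have hcsub : c ∈ (C'ᶜ : Set V) := hc.2
    have hcC : c ∈ C := hc.1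
    have hkey : G.Adj (u : V) c ↔ G.Adj (v : V) c := by
      have := hHx ⟨c, hcsub⟩ (fun he => hcu (congrArg Subtype.val he))
        (fun he => hcv (congrArg Subtype.val he))
      simpa using this
    ext x
    simp only [Set.mem_insert_iff, SimpleGraph.mem_neighborSet]
    by_cases hxu : x = (u : V)
    · subst hxu
      constructor
      · intro _
        by_cases h2 : (u : V) = (v : V)
        · exact Or.inl h2
        · exact Or.inr hadj_vu
      · intro _
        exact Or.inl rfl
    by_cases hxv : x = (v : V)
    · subst hxv
      exact ⟨fun _ => Or.inl rfl, fun _ => Or.inr hadj_vu.symm⟩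
    have key : G.Adj (u : V) x ↔ G.Adj (v : V) x := by
      by_cases hx : x ∈ C'
      · have hxC : x ∈ C := hsub hx
        exact (htrans x hxC c hcC (u : V)).trans
          (hkey.trans (htrans x hxC c hcC (v : V)).symm)
      · exact hHx ⟨x, hx⟩ (fun he => hxu (congrArg Subtype.val he))
          (fun he => hxv (congrArg Subtype.val he))
    constructor
    · rintro (h1 | h1)
      · exact absurd h1 hxu
      · exact Or.inr (key.mp h1)
    · rintro (h1 | h1)
      · exact absurd h1 hxv
      · exact Or.inr (key.mpr h1)
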